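/- Let n be a natural number, k ∈ ℝ, and for i = 1,…,n let λᵢ, μᵢ, αᵢ, βᵢ, Aᵢ, Bᵢ ∈ ℝ with λᵢ² + μᵢ² = k² for every i. Define T : ℝ² → ℝ by T(x,y) = Σᵢ₌₁ⁿ ( Aᵢ sin(λᵢ x + μᵢ y + αᵢ) + Bᵢ cos(λᵢ x + μᵢ y + βᵢ) ). Let L ⊆ ℝ² be an affine line, let ν be a unit vector normal to L, and let σ_L : ℝ² → ℝ² be the reflection across L. If the directional derivative of T in the direction ν vanishes at every point of L, then T(σ_L(p)) = T(p) for every p ∈ ℝ². (Lamé's theorem, part 2: such a solution of the Helmholtz equation is symmetric about any line along which its normal derivative vanishes.) -/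

import Mathlib

open EuclideanGeometry Real


private lemma deriv_sum_eq_zero {n : ℕ} (f f' : Fin n → ℝ → ℝ)
    (hf : ∀ i s, HasDerivAt (f i) (f' i s) s) (c : Fin n → ℝ)
    (h : ∀ s, ∑ i, c i * f i s = 0) : ∀ s, ∑ i, c i * f' i s = 0 := by
  intro s
  have hF : HasDerivAt (fun s => ∑ i, c i * f i s) (∑ i, c i * f' i s) s :=
    HasDerivAt.fun_sum fun i _ => (hf i s).const_mul (c i)
  have h0 : (fun s => ∑ i, c i * f i s) = fun _ => (0:ℝ) := funext h
  have hd := hF.deriv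
  rw [h0] at hd
  simpa using hd.symm

private lemma lame_key {n : ℕ} (k : ℝ) (a b : Fin n → ℝ)
    (hab : ∀ i, a i ^ 2 + b i ^ 2 = k ^ 2)
    (A B al be : Fin n → ℝ)
    (h : ∀ s : ℝ, ∑ i, b i * (A i * Real.cos (a i * s + al i) - B i * Real.sin (a i * s + be i)) = 0)
    (t : ℝ) :
    ∑ i, Real.sin (b i * t) * (A i * Real.cos (al i) - B i * Real.sin (be i)) = 0 := by
  -- the basic functions and their derivatives
  have hg : ∀ (i : Fin n) (s : ℝ),
      HasDerivAt (fun s => A i * Real.cos (a i * s + al i) - B i * Real.sin (a i * s + be i))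
        (-(a i) * (A i * Real.sin (a i * s + al i) + B i * Real.cos (a i * s + be i))) s := by
    intro i s
    have hu : HasDerivAt (fun s : ℝ => a i * s + al i) (a i) s := by
      simpa using ((hasDerivAt_id s).const_mul (a i)).add_const (al i)
    have hu' : HasDerivAt (fun s : ℝ => a i * s + be i) (a i) s := by
      simpa using ((hasDerivAt_id s).const_mul (a i)).add_const (be i)
    have h1 := ((Real.hasDerivAt_cos (a i * s + al i)).comp s hu).const_mul (A i)
    have h2 := ((Real.hasDerivAt_sin (a i * s + be i)).comp s hu').const_mul (B i)
    exact (h1.fun_sub h2).congr_deriv (by ring)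
  have hgd : ∀ (i : Fin n) (s : ℝ),
      HasDerivAt (fun s => -(a i) * (A i * Real.sin (a i * s + al i) + B i * Real.cos (a i * s + be i)))
        (-(a i)^2 * (A i * Real.cos (a i * s + al i) - B i * Real.sin (a i * s + be i))) s := by
    intro i s
    have hu : HasDerivAt (fun s : ℝ => a i * s + al i) (a i) s := by
      simpa using ((hasDerivAt_id s).const_mul (a i)).add_const (al i)
    have hu' : HasDerivAt (fun s : ℝ => a i * s + be i) (a i) s := by
      simpa using ((hasDerivAt_id s).const_mul (a i)).add_const (be i)
    have h1 := ((Real.hasDerivAt_sin (a i * s + al i)).comp s hu).const_mul (A i)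
    have h2 := ((Real.hasDerivAt_cos (a i * s + be i)).comp s hu').const_mul (B i)
    exact ((h1.fun_add h2).const_mul (-(a i))).congr_deriv (by ring)
  -- main induction
  have main : ∀ (m : ℕ) (s : ℝ),
      ∑ i, (b i * (k ^ 2 - a i ^ 2) ^ m) *
        (A i * Real.cos (a i * s + al i) - B i * Real.sin (a i * s + be i)) = 0 := by
    intro m
    induction m with
    | zero => intro s; simpa using h s
    | succ m ih =>
      have d1 := deriv_sum_eq_zero _ _ hg (fun i => b i * (k ^ 2 - a i ^ 2) ^ m) ih
      have d2 := deriv_sum_eq_zero _ _ hgd (fun i => b i * (k ^ 2 - a i ^ 2) ^ m) d1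
      intro s
      have e : ∀ i : Fin n, (b i * (k ^ 2 - a i ^ 2) ^ (m+1)) *
          (A i * Real.cos (a i * s + al i) - B i * Real.sin (a i * s + be i))
          = k ^ 2 * ((b i * (k ^ 2 - a i ^ 2) ^ m) *
              (A i * Real.cos (a i * s + al i) - B i * Real.sin (a i * s + be i)))
            + (b i * (k ^ 2 - a i ^ 2) ^ m) *
              (-(a i)^2 * (A i * Real.cos (a i * s + al i) - B i * Real.sin (a i * s + be i))) := by
        intro i; ring
      calc ∑ i, (b i * (k ^ 2 - a i ^ 2) ^ (m+1)) *
          (A i * Real.cos (a i * s + al i) - B i * Real.sin (a i * s + be i))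
          = ∑ i, (k ^ 2 * ((b i * (k ^ 2 - a i ^ 2) ^ m) *
              (A i * Real.cos (a i * s + al i) - B i * Real.sin (a i * s + be i)))
            + (b i * (k ^ 2 - a i ^ 2) ^ m) *
              (-(a i)^2 * (A i * Real.cos (a i * s + al i) - B i * Real.sin (a i * s + be i)))) :=
            Finset.sum_congr rfl (fun i _ => e i)
        _ = k ^ 2 * (∑ i, (b i * (k ^ 2 - a i ^ 2) ^ m) *
              (A i * Real.cos (a i * s + al i) - B i * Real.sin (a i * s + be i)))
            + ∑ i, (b i * (k ^ 2 - a i ^ 2) ^ m) *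
              (-(a i)^2 * (A i * Real.cos (a i * s + al i) - B i * Real.sin (a i * s + be i))) := by
            rw [Finset.sum_add_distrib, Finset.mul_sum]
        _ = 0 := by rw [ih s, d2 s]; ring
  -- now the series argument
  have hs : HasSum (fun m : ℕ => ∑ i, ((-1) ^ m * (b i * t) ^ (2 * m + 1) / (2 * m + 1).factorial) *
        (A i * Real.cos (al i) - B i * Real.sin (be i)))
      (∑ i, Real.sin (b i * t) * (A i * Real.cos (al i) - B i * Real.sin (be i))) :=
    hasSum_sum fun i _ => (Real.hasSum_sin (b i * t)).mul_right _
  have hz : ∀ m : ℕ, ∑ i, ((-1) ^ m * (b i * t) ^ (2 * m + 1) / (2 * m + 1).factorial) *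
        (A i * Real.cos (al i) - B i * Real.sin (be i)) = 0 := by
    intro m
    have hb2 : ∀ i : Fin n, (b i : ℝ) ^ 2 = k ^ 2 - a i ^ 2 := by
      intro i; have := hab i; linarith
    have e : ∀ i : Fin n, ((-1) ^ m * (b i * t) ^ (2 * m + 1) / (2 * m + 1).factorial) *
          (A i * Real.cos (al i) - B i * Real.sin (be i))
        = ((-1) ^ m * t ^ (2 * m + 1) / (2 * m + 1).factorial) *
          ((b i * (k ^ 2 - a i ^ 2) ^ m) * (A i * Real.cos (al i) - B i * Real.sin (be i))) := by
      intro i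
      have : (b i * t) ^ (2 * m + 1) = (b i ^ 2) ^ m * b i * t ^ (2 * m + 1) := by
        rw [mul_pow]; ring_nf
      rw [this, hb2 i]; ring
    rw [Finset.sum_congr rfl (fun i _ => e i), ← Finset.mul_sum]
    have := main m 0
    simp only [mul_zero, zero_add] at this
    rw [this, mul_zero]
  have h0 : (fun m : ℕ => ∑ i, ((-1) ^ m * (b i * t) ^ (2 * m + 1) / (2 * m + 1).factorial) *
        (A i * Real.cos (al i) - B i * Real.sin (be i))) = fun _ => (0:ℝ) := funext hz
  rw [h0] at hs
  exact hs.unique hasSum_zero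


private lemma hasDerivAt_trig_sum {n : ℕ} (A B c d e : Fin n → ℝ) (t : ℝ) :
    HasDerivAt (fun t : ℝ => ∑ i, (A i * Real.sin (c i + t * e i) + B i * Real.cos (d i + t * e i)))
      (∑ i, e i * (A i * Real.cos (c i + t * e i) - B i * Real.sin (d i + t * e i))) t := by
  apply HasDerivAt.fun_sum; intro i _
  have hu : HasDerivAt (fun t : ℝ => c i + t * e i) (e i) t := by
    simpa using ((hasDerivAt_id t).mul_const (e i)).const_add (c i)
  have hu' : HasDerivAt (fun t : ℝ => d i + t * e i) (e i) t := by
    simpa using ((hasDerivAt_id t).mul_const (e i)).const_add (d i)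
  convert (((Real.hasDerivAt_sin _).comp t hu).const_mul (A i)).fun_add
    (((Real.hasDerivAt_cos _).comp t hu').const_mul (B i)) using 1
  · funext y; simp only [Function.comp_apply]
  · ring

private lemma trig_diff (Ai Bi u v w : ℝ) :
    (Ai * Real.sin (u - w) + Bi * Real.cos (v - w)) - (Ai * Real.sin (u + w) + Bi * Real.cos (v + w))
    = -2 * (Real.sin w * (Ai * Real.cos u - Bi * Real.sin v)) := by
  rw [Real.sin_sub, Real.sin_add, Real.cos_sub, Real.cos_add]; ring

private lemma lame_scalar (n : ℕ) (k : ℝ) (lam mu al be A B : Fin n → ℝ)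
    (hk : ∀ i, (lam i) ^ 2 + (mu i) ^ 2 = k ^ 2)
    (ν0 ν1 q0 q1 : ℝ) (hν : ν0 ^ 2 + ν1 ^ 2 = 1)
    (h : ∀ s : ℝ, deriv (fun t : ℝ => ∑ i,
        (A i * Real.sin (lam i * (q0 + s * -ν1 + t * ν0) + mu i * (q1 + s * ν0 + t * ν1) + al i) +
         B i * Real.cos (lam i * (q0 + s * -ν1 + t * ν0) + mu i * (q1 + s * ν0 + t * ν1) + be i))) 0 = 0)
    (c : ℝ) :
    ∑ i, (A i * Real.sin (lam i * (q0 - c * ν0) + mu i * (q1 - c * ν1) + al i) +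
          B i * Real.cos (lam i * (q0 - c * ν0) + mu i * (q1 - c * ν1) + be i))
      = ∑ i, (A i * Real.sin (lam i * (q0 + c * ν0) + mu i * (q1 + c * ν1) + al i) +
          B i * Real.cos (lam i * (q0 + c * ν0) + mu i * (q1 + c * ν1) + be i)) := by
  have hab : ∀ i : Fin n, (mu i * ν0 - lam i * ν1) ^ 2 + (lam i * ν0 + mu i * ν1) ^ 2 = k ^ 2 := by
    intro i
    linear_combination (ν0 ^ 2 + ν1 ^ 2) * hk i + k ^ 2 * hν
  have hkey : ∀ s : ℝ, ∑ i, (lam i * ν0 + mu i * ν1) *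
      (A i * Real.cos ((mu i * ν0 - lam i * ν1) * s + (lam i * q0 + mu i * q1 + al i)) -
       B i * Real.sin ((mu i * ν0 - lam i * ν1) * s + (lam i * q0 + mu i * q1 + be i))) = 0 := by
    intro s
    have hs0 := h s
    have hfe : (fun t : ℝ => ∑ i,
        (A i * Real.sin (lam i * (q0 + s * -ν1 + t * ν0) + mu i * (q1 + s * ν0 + t * ν1) + al i) +
         B i * Real.cos (lam i * (q0 + s * -ν1 + t * ν0) + mu i * (q1 + s * ν0 + t * ν1) + be i)))
        = fun t : ℝ => ∑ i,
        (A i * Real.sin (((mu i * ν0 - lam i * ν1) * s + (lam i * q0 + mu i * q1 + al i)) + t * (lam i * ν0 + mu i * ν1)) +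
         B i * Real.cos (((mu i * ν0 - lam i * ν1) * s + (lam i * q0 + mu i * q1 + be i)) + t * (lam i * ν0 + mu i * ν1))) := by
      funext t
      refine Finset.sum_congr rfl fun i _ => ?_
      have e1 : lam i * (q0 + s * -ν1 + t * ν0) + mu i * (q1 + s * ν0 + t * ν1) + al i
          = ((mu i * ν0 - lam i * ν1) * s + (lam i * q0 + mu i * q1 + al i)) + t * (lam i * ν0 + mu i * ν1) := by ring
      have e2 : lam i * (q0 + s * -ν1 + t * ν0) + mu i * (q1 + s * ν0 + t * ν1) + be i
          = ((mu i * ν0 - lam i * ν1) * s + (lam i * q0 + mu i * q1 + be i)) + t * (lam i * ν0 + mu i * ν1) := by ring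
      rw [e1, e2]
    rw [hfe] at hs0
    have hd : HasDerivAt (fun t : ℝ => ∑ i,
        (A i * Real.sin (((mu i * ν0 - lam i * ν1) * s + (lam i * q0 + mu i * q1 + al i)) + t * (lam i * ν0 + mu i * ν1)) +
         B i * Real.cos (((mu i * ν0 - lam i * ν1) * s + (lam i * q0 + mu i * q1 + be i)) + t * (lam i * ν0 + mu i * ν1))))
        (∑ i, (lam i * ν0 + mu i * ν1) *
          (A i * Real.cos ((mu i * ν0 - lam i * ν1) * s + (lam i * q0 + mu i * q1 + al i)) -
           B i * Real.sin ((mu i * ν0 - lam i * ν1) * s + (lam i * q0 + mu i * q1 + be i)))) 0 := by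
      have := hasDerivAt_trig_sum A B
        (fun i => (mu i * ν0 - lam i * ν1) * s + (lam i * q0 + mu i * q1 + al i))
        (fun i => (mu i * ν0 - lam i * ν1) * s + (lam i * q0 + mu i * q1 + be i))
        (fun i => lam i * ν0 + mu i * ν1) 0
      simpa using this
    rw [hd.deriv] at hs0
    exact hs0
  have hmain := lame_key k (fun i => mu i * ν0 - lam i * ν1) (fun i => lam i * ν0 + mu i * ν1)
    hab A B (fun i => lam i * q0 + mu i * q1 + al i) (fun i => lam i * q0 + mu i * q1 + be i)
    hkey c
  rw [← sub_eq_zero, ← Finset.sum_sub_distrib]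
  have e : ∀ i : Fin n,
      (A i * Real.sin (lam i * (q0 - c * ν0) + mu i * (q1 - c * ν1) + al i) +
       B i * Real.cos (lam i * (q0 - c * ν0) + mu i * (q1 - c * ν1) + be i)) -
      (A i * Real.sin (lam i * (q0 + c * ν0) + mu i * (q1 + c * ν1) + al i) +
       B i * Real.cos (lam i * (q0 + c * ν0) + mu i * (q1 + c * ν1) + be i))
      = -2 * (Real.sin ((lam i * ν0 + mu i * ν1) * c) *
          (A i * Real.cos (lam i * q0 + mu i * q1 + al i) - B i * Real.sin (lam i * q0 + mu i * q1 + be i))) := by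
    intro i
    have e1 : lam i * (q0 - c * ν0) + mu i * (q1 - c * ν1) + al i
        = (lam i * q0 + mu i * q1 + al i) - (lam i * ν0 + mu i * ν1) * c := by ring
    have e2 : lam i * (q0 - c * ν0) + mu i * (q1 - c * ν1) + be i
        = (lam i * q0 + mu i * q1 + be i) - (lam i * ν0 + mu i * ν1) * c := by ring
    have e3 : lam i * (q0 + c * ν0) + mu i * (q1 + c * ν1) + al i
        = (lam i * q0 + mu i * q1 + al i) + (lam i * ν0 + mu i * ν1) * c := by ring
    have e4 : lam i * (q0 + c * ν0) + mu i * (q1 + c * ν1) + be i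
        = (lam i * q0 + mu i * q1 + be i) + (lam i * ν0 + mu i * ν1) * c := by ring
    rw [e1, e2, e3, e4, trig_diff]
  rw [Finset.sum_congr rfl fun i _ => e i, ← Finset.mul_sum, hmain, mul_zero]

/-- Lamé's theorem, part 2: a finite trigonometric solution of the Helmholtz
equation is symmetric about any affine line along which its normal derivative
vanishes. -/
theorem lame_symmetric
    (n : ℕ) (k : ℝ) (lam mu al be A B : Fin n → ℝ)
    (hk : ∀ i, (lam i) ^ 2 + (mu i) ^ 2 = k ^ 2)
    (T : EuclideanSpace ℝ (Fin 2) → ℝ)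
    (hT : ∀ p, T p = ∑ i, (A i * Real.sin (lam i * p 0 + mu i * p 1 + al i) +
                            B i * Real.cos (lam i * p 0 + mu i * p 1 + be i)))
    (L : AffineSubspace ℝ (EuclideanSpace ℝ (Fin 2))) [Nonempty L]
    (hline : Module.finrank ℝ L.direction = 1)
    (ν : EuclideanSpace ℝ (Fin 2)) (hν : ‖ν‖ = 1) (hνL : ν ∈ L.directionᗮ)
    (hnormal : ∀ p ∈ L, deriv (fun t : ℝ => T (p + t • ν)) 0 = 0) :
    ∀ p, T (EuclideanGeometry.reflection L p) = T p := by
  intro p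
  have hν0 : ν ≠ 0 := by intro h; rw [h] at hν; simp at hν
  -- coordinates of ν have unit sum of squares
  have hν2 : ν 0 ^ 2 + ν 1 ^ 2 = 1 := by
    have h1 : Real.sqrt (ν 0 ^ 2 + ν 1 ^ 2) = 1 := by
      rw [← hν, EuclideanSpace.norm_eq]
      simp [Fin.sum_univ_two, sq_abs]
    have h2 : (0:ℝ) ≤ ν 0 ^ 2 + ν 1 ^ 2 := by positivity
    nlinarith [Real.sq_sqrt h2]
  -- the orthogonal complement of the direction is spanned by ν
  have hperp : L.directionᗮ = Submodule.span ℝ {ν} := by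
    symm
    apply Submodule.eq_of_le_of_finrank_eq
    · exact Submodule.span_le.2 (by simpa using hνL)
    · rw [finrank_span_singleton hν0]
      have := Submodule.finrank_add_finrank_orthogonal (𝕜 := ℝ) L.direction
      rw [hline, finrank_euclideanSpace_fin] at this
      omega
  have hdir : L.direction = (Submodule.span ℝ {ν})ᗮ := by
    rw [← hperp, Submodule.orthogonal_orthogonal]
  -- the tangent vector
  set τ : EuclideanSpace ℝ (Fin 2) := (WithLp.equiv 2 (Fin 2 → ℝ)).symm ![-ν 1, ν 0] with hτdef
  have hτ : τ ∈ L.direction := by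
    rw [hdir, Submodule.mem_orthogonal]
    intro u hu
    obtain ⟨r, rfl⟩ := Submodule.mem_span_singleton.1 hu
    rw [real_inner_smul_left]
    have : (inner ℝ ν τ : ℝ) = 0 := by
      simp [hτdef, PiLp.inner_apply, Fin.sum_univ_two, RCLike.inner_apply, conj_trivial,
        WithLp.equiv_symm_apply]
      ring
    rw [this, mul_zero]
  -- decompose p
  set q0 : EuclideanSpace ℝ (Fin 2) := ↑(EuclideanGeometry.orthogonalProjection L p) with hq0def
  have hq0L : q0 ∈ L := (EuclideanGeometry.orthogonalProjection L p).2
  have hmem : p -ᵥ q0 ∈ L.directionᗮ :=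
    EuclideanGeometry.vsub_orthogonalProjection_mem_direction_orthogonal L p
  rw [hperp] at hmem
  obtain ⟨c, hc⟩ := Submodule.mem_span_singleton.1 hmem
  rw [vsub_eq_sub] at hc
  have hp : p = q0 + c • ν := by rw [hc]; abel
  have hrefl : EuclideanGeometry.reflection L p = q0 - c • ν := by
    rw [EuclideanGeometry.reflection_apply', vsub_eq_sub, vadd_eq_add, ← hq0def]
    have : q0 - p + q0 = q0 - (p - q0) := by abel
    rw [this, ← hc]
  -- the normal derivative hypothesis in scalar form
  have hnorm' : ∀ s : ℝ, deriv (fun t : ℝ => ∑ i,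
      (A i * Real.sin (lam i * (q0 0 + s * -ν 1 + t * ν 0) + mu i * (q0 1 + s * ν 0 + t * ν 1) + al i) +
       B i * Real.cos (lam i * (q0 0 + s * -ν 1 + t * ν 0) + mu i * (q0 1 + s * ν 0 + t * ν 1) + be i))) 0 = 0 := by
    intro s
    have hmemL : (s • τ) +ᵥ q0 ∈ L :=
      AffineSubspace.vadd_mem_of_mem_direction (Submodule.smul_mem _ s hτ) hq0L
    have hfe : (fun t : ℝ => T (((s • τ) +ᵥ q0) + t • ν)) = fun t : ℝ => ∑ i,
        (A i * Real.sin (lam i * (q0 0 + s * -ν 1 + t * ν 0) + mu i * (q0 1 + s * ν 0 + t * ν 1) + al i) +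
         B i * Real.cos (lam i * (q0 0 + s * -ν 1 + t * ν 0) + mu i * (q0 1 + s * ν 0 + t * ν 1) + be i)) := by
      funext t
      rw [hT]
      have hx : (((s • τ) +ᵥ q0) + t • ν) 0 = q0 0 + s * -ν 1 + t * ν 0 := by
        simp [hτdef, vadd_eq_add, PiLp.add_apply, PiLp.smul_apply, smul_eq_mul,
          WithLp.equiv_symm_apply]
        ring
      have hy : (((s • τ) +ᵥ q0) + t • ν) 1 = q0 1 + s * ν 0 + t * ν 1 := by
        simp [hτdef, vadd_eq_add, PiLp.add_apply, PiLp.smul_apply, smul_eq_mul,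
          WithLp.equiv_symm_apply]
        ring
      rw [hx, hy]
    rw [← hfe]
    exact hnormal _ hmemL
  -- conclude
  conv_lhs => rw [hrefl]
  conv_rhs => rw [hp]
  rw [hT, hT]
  have k0 : (q0 - c • ν) 0 = q0 0 - c * ν 0 := by
    simp [PiLp.sub_apply, PiLp.smul_apply, smul_eq_mul]
  have k1 : (q0 - c • ν) 1 = q0 1 - c * ν 1 := by
    simp [PiLp.sub_apply, PiLp.smul_apply, smul_eq_mul]
  have k0' : (q0 + c • ν) 0 = q0 0 + c * ν 0 := by
    simp [PiLp.add_apply, PiLp.smul_apply, smul_eq_mul]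
  have k1' : (q0 + c • ν) 1 = q0 1 + c * ν 1 := by
    simp [PiLp.add_apply, PiLp.smul_apply, smul_eq_mul]
  rw [k0, k1, k0', k1']
  exact lame_scalar n k lam mu al be A B hk (ν 0) (ν 1) (q0 0) (q0 1) hν2 hnorm' c
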